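/- Let (Ω, 𝓕, μ) be a standard Borel probability space, T : Ω → ℝ measurable, E a standard Borel space, X : Ω → E measurable, Y : Ω → ℝ measurable, L > 0 fixed, t ∈ [0, L), and H : E → (ℝ → ℝ≥0) with (x,s) ↦ H(x)(s) jointly measurable. Assume (i) for (μ.map X)-almost every x, the regular conditional distribution of T given X = x is absolutely continuous with respect to Lebesgue measure with density u ↦ 1_{[0,∞)}(u) · H(x)(u) · exp(−∫₀ᵘ H(x)(s) ds); and (ii) min(T,t) and Y are conditionally independent given the σ-algebra σ(X). Define the propensity process Θ_t : Ω → (ℝ → ℝ≥0) by Θ_t(ω)(s) = H(X(ω))(s) for s ∈ [0, t) and 0 otherwise. Then min(T,t) and Y are conditionally independent given the σ-algebra generated by Θ_t. -/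

import Mathlib

open MeasureTheory ProbabilityTheory
open scoped ENNReal NNReal

/-- For a sub-σ-algebra `m`-measurable `g : α → ℝ≥0∞`, integrating against the conditional
expectation kernel gives back `g` almost everywhere. -/
lemma lintegral_condexpKernel_of_measurable {α : Type*} {m : MeasurableSpace α}
    [mα : MeasurableSpace α]
    [StandardBorelSpace α] [Nonempty α] (ν : Measure α) [IsFiniteMeasure ν]
    (hm : m ≤ mα) {g : α → ℝ≥0∞} (hg : Measurable[m] g) :
    ∀ᵐ x ∂ν, ∫⁻ y, g y ∂(condExpKernel ν m x) = g x := by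
  have hset : ∀ s : Set α, MeasurableSet[m] s →
      ∀ᵐ x ∂ν, condExpKernel ν m x s = Set.indicator s (fun _ => (1 : ℝ≥0∞)) x := by
    intro s hs
    have h1 : (fun x => (condExpKernel ν m x s).toReal) =ᵐ[ν] ν⟦s | m⟧ :=
      condExpKernel_ae_eq_condExp hm (hm s hs)
    have h2 : ν⟦s | m⟧ = Set.indicator s (fun _ => (1 : ℝ)) := by
      refine condExp_of_stronglyMeasurable hm ?_ ?_
      · exact ((stronglyMeasurable_const (β := ℝ))).indicator hs
      · exact (integrable_const (1 : ℝ)).indicator (hm s hs)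
    rw [h2] at h1
    filter_upwards [h1] with x hx
    have hne : condExpKernel ν m x s ≠ ⊤ := measure_ne_top _ _
    by_cases hxs : x ∈ s
    · simp only [Set.indicator_of_mem hxs] at hx ⊢
      exact (ENNReal.toReal_eq_one_iff _).mp hx
    · simp only [Set.indicator_of_notMem hxs] at hx ⊢
      exact (ENNReal.toReal_eq_zero_iff _).mp hx |>.resolve_right hne
  refine @Measurable.ennreal_induction α m
    (fun g => ∀ᵐ x ∂ν, ∫⁻ y, g y ∂(condExpKernel ν m x) = g x) ?_ ?_ ?_ g hg
  · intro c s hs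
    filter_upwards [hset s hs] with x hx
    rw [lintegral_indicator_const (hm s hs), hx]
    by_cases hxs : x ∈ s <;>
      simp [Set.indicator_of_mem, Set.indicator_of_notMem, hxs]
  · intro f g hdisj hf hgm hPf hPg
    filter_upwards [hPf, hPg] with x hxf hxg
    simp only [Pi.add_apply]
    rw [lintegral_add_left (hf.mono hm le_rfl), hxf, hxg]
  · intro f hf hmono hPf
    rw [← ae_all_iff] at hPf
    filter_upwards [hPf] with x hx
    rw [lintegral_iSup (fun n => (hf n).mono hm le_rfl) hmono]
    exact iSup_congr hx

/-- If `f` and `g` are conditionally independent given `m₂`, and for every Borel set `s` the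
conditional probability `μ⟦f ⁻¹' s | m₂⟧` admits an `m₁`-measurable version (for `m₁ ≤ m₂`),
then `f` and `g` are conditionally independent given `m₁`. -/
lemma condIndepFun_of_exists_measurable_version {Ω : Type*} {m₁ m₂ : MeasurableSpace Ω}
    [mΩ : MeasurableSpace Ω] [StandardBorelSpace Ω]
    {μ : Measure Ω} [IsProbabilityMeasure μ] (h12 : m₁ ≤ m₂) (h2 : m₂ ≤ mΩ)
    {β : Type*} [MeasurableSpace β]
    {f : Ω → β} {g : Ω → ℝ} (hf : Measurable f) (hg : Measurable g)
    (h_ind : CondIndepFun m₂ h2 f g μ)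
    (h_ver : ∀ s : Set β, MeasurableSet s → ∃ c : Ω → ℝ, StronglyMeasurable[m₁] c ∧
      (∀ ω, ‖c ω‖ ≤ 1) ∧ (μ⟦f ⁻¹' s | m₂⟧) =ᵐ[μ] c) :
    CondIndepFun m₁ (h12.trans h2) f g μ := by
  rw [condIndepFun_iff_condExp_inter_preimage_eq_mul hf hg] at h_ind ⊢
  intro s u hs hu
  obtain ⟨c, hcm, hcb, hce⟩ := h_ver s hs
  have h1Ω : m₁ ≤ mΩ := h12.trans h2
  have hc_int : Integrable c μ :=
    (integrable_const (1 : ℝ)).mono' ((hcm.mono h1Ω).aestronglyMeasurable) (ae_of_all _ hcb)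
  have hcondg_int : Integrable (μ⟦g ⁻¹' u | m₂⟧) μ := integrable_condExp
  have h_mul_int : Integrable (c * μ⟦g ⁻¹' u | m₂⟧) μ :=
    hcondg_int.bdd_mul ((hcm.mono h1Ω).aestronglyMeasurable) (ae_of_all _ hcb)
  -- `μ⟦f ⁻¹' s | m₁⟧ =ᵐ[μ] c`
  have hfs1 : (μ⟦f ⁻¹' s | m₁⟧) =ᵐ[μ] c := by
    have := condExp_condExp_of_le h12 h2 (μ := μ) (f := (f ⁻¹' s).indicator fun _ => (1:ℝ))
    refine this.symm.trans ?_
    calc μ[μ⟦f ⁻¹' s | m₂⟧ | m₁] =ᵐ[μ] μ[c | m₁] := condExp_congr_ae hce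
    _ = c := condExp_of_stronglyMeasurable h1Ω hcm hc_int
  calc (μ⟦f ⁻¹' s ∩ g ⁻¹' u | m₁⟧)
      =ᵐ[μ] μ[μ⟦f ⁻¹' s ∩ g ⁻¹' u | m₂⟧ | m₁] := (condExp_condExp_of_le h12 h2).symm
    _ =ᵐ[μ] μ[c * μ⟦g ⁻¹' u | m₂⟧ | m₁] := by
        refine condExp_congr_ae ?_
        refine (h_ind s u hs hu).trans ?_
        filter_upwards [hce] with ω hω
        simp only [Pi.mul_apply, hω]
    _ =ᵐ[μ] c * μ[μ⟦g ⁻¹' u | m₂⟧ | m₁] :=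
        condExp_mul_of_stronglyMeasurable_left hcm h_mul_int hcondg_int
    _ =ᵐ[μ] c * μ⟦g ⁻¹' u | m₁⟧ := by
        have h := condExp_condExp_of_le h12 h2 (μ := μ) (f := (g ⁻¹' u).indicator fun _ => (1:ℝ))
        filter_upwards [h] with ω hω
        simp only [Pi.mul_apply, hω]
    _ =ᵐ[μ] fun ω => (μ⟦f ⁻¹' s | m₁⟧) ω * (μ⟦g ⁻¹' u | m₁⟧) ω := by
        filter_upwards [hfs1] with ω hω
        simp only [Pi.mul_apply, hω]

/-- Joint measurability of a parametrized kernel integral. -/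
lemma measurable_lintegral_kernel_param {α γ : Type*} {mα : MeasurableSpace α}
    [mγ : MeasurableSpace γ] (κ : Kernel α γ) [IsSFiniteKernel κ]
    {G : γ → ℝ → ℝ≥0∞} (hG : Measurable fun p : γ × ℝ => G p.1 p.2) :
    Measurable fun p : α × ℝ => ∫⁻ y, G y p.2 ∂κ p.1 := by
  have hu : Measurable (Function.uncurry fun (p : α × ℝ) (y : γ) => G y p.2) := by
    have : (Function.uncurry fun (p : α × ℝ) (y : γ) => G y p.2)
        = fun q : (α × ℝ) × γ => G q.2 q.1.2 := rfl
    rw [this]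
    exact hG.comp (measurable_snd.prodMk measurable_fst.snd)
  have h := Measurable.lintegral_kernel_prod_right
    (κ := κ.comap Prod.fst measurable_fst) hu
  simpa [Kernel.comap_apply] using h

/-- Measurability (w.r.t. an arbitrary σ-algebra on the parameter space) of the integral of the
hazard-type density built from a kernel. -/
lemma measurable_setLIntegral_hazard_density {α γ : Type*} {mα : MeasurableSpace α}
    [mγ : MeasurableSpace γ] (κ : Kernel α γ) [IsSFiniteKernel κ]
    {G : γ → ℝ → ℝ≥0∞} (hG : Measurable fun p : γ × ℝ => G p.1 p.2)
    {B : Set ℝ} (hB : MeasurableSet B) :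
    Measurable fun x => ∫⁻ u in B,
      (∫⁻ y, G y u ∂κ x) *
        ENNReal.ofReal (Real.exp (-(∫⁻ r in Set.Ioc 0 u, ∫⁻ y, G y r ∂κ x).toReal)) := by
  classical
  have hHkJ : Measurable fun p : α × ℝ => ∫⁻ y, G y p.2 ∂κ p.1 :=
    measurable_lintegral_kernel_param κ hG
  have hIkJ : Measurable fun p : α × ℝ => ∫⁻ r in Set.Ioc 0 p.2, ∫⁻ y, G y r ∂κ p.1 := by
    have : ∀ p : α × ℝ, (∫⁻ r in Set.Ioc 0 p.2, ∫⁻ y, G y r ∂κ p.1)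
        = ∫⁻ r, (if 0 < r ∧ r ≤ p.2 then ∫⁻ y, G y r ∂κ p.1 else 0) := by
      intro p
      rw [← lintegral_indicator measurableSet_Ioc]
      congr 1 with r
      simp [Set.indicator_apply, Set.mem_Ioc]
    simp only [this]
    apply Measurable.lintegral_prod_right'
      (f := fun q : (α × ℝ) × ℝ => if 0 < q.2 ∧ q.2 ≤ q.1.2 then ∫⁻ y, G y q.2 ∂κ q.1.1 else 0)
    refine Measurable.ite ?_ ?_ measurable_const
    · exact (measurableSet_lt measurable_const measurable_snd).inter
        (measurableSet_le measurable_snd measurable_fst.snd)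
    · exact hHkJ.comp (measurable_fst.fst.prodMk measurable_snd)
  have hdkJ : Measurable fun p : α × ℝ =>
      (∫⁻ y, G y p.2 ∂κ p.1) *
        ENNReal.ofReal (Real.exp (-(∫⁻ r in Set.Ioc 0 p.2, ∫⁻ y, G y r ∂κ p.1).toReal)) :=
    hHkJ.mul (ENNReal.measurable_ofReal.comp (Real.measurable_exp.comp hIkJ.ennreal_toReal.neg))
  have h := Measurable.lintegral_prod_right' (ν := volume)
    (f := fun p : α × ℝ => if p.2 ∈ B then
      (∫⁻ y, G y p.2 ∂κ p.1) *
        ENNReal.ofReal (Real.exp (-(∫⁻ r in Set.Ioc 0 p.2, ∫⁻ y, G y r ∂κ p.1).toReal)) else 0)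
    (Measurable.ite (measurable_snd hB) hdkJ measurable_const)
  have heq : (fun x => ∫⁻ u in B,
      (∫⁻ y, G y u ∂κ x) *
        ENNReal.ofReal (Real.exp (-(∫⁻ r in Set.Ioc 0 u, ∫⁻ y, G y r ∂κ x).toReal)))
      = fun x => ∫⁻ u, (if u ∈ B then
        (∫⁻ y, G y u ∂κ x) *
          ENNReal.ofReal (Real.exp (-(∫⁻ r in Set.Ioc 0 u, ∫⁻ y, G y r ∂κ x).toReal)) else 0) := by
    funext x
    rw [← lintegral_indicator hB]
    congr 1 with u
  rw [heq]
  exact h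

lemma intervalIntegral_coe_eq_toReal {g : ℝ → ℝ≥0} (hg : Measurable fun r => g r) {u : ℝ}
    (hu : 0 ≤ u) :
    ∫ r in (0:ℝ)..u, (g r : ℝ) = (∫⁻ r in Set.Ioc 0 u, (g r : ℝ≥0∞)).toReal := by
  rw [intervalIntegral.integral_of_le hu,
    integral_eq_lintegral_of_nonneg_ae (ae_of_all _ fun r => (g r).coe_nonneg)
      hg.coe_nnreal_real.aestronglyMeasurable]
  congr 1
  refine lintegral_congr fun r => ?_
  exact ENNReal.ofReal_coe_nnreal

/-- Under the hazard-density model, the conditional probability that the treatment time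
restricted to `t` lands in a Borel set `s` admits a version which is measurable with respect
to a sub-σ-algebra `m` for which the hazard evaluations on `[0, t)` are `m`-measurable. -/
lemma exists_hazard_version {E : Type*} {m : MeasurableSpace E}
    [mE : MeasurableSpace E] [StandardBorelSpace E] [Nonempty E]
    (hm : m ≤ mE) (ν : Measure E) [IsProbabilityMeasure ν]
    (κT : Kernel E ℝ) [IsMarkovKernel κT]
    (H : E → ℝ → ℝ≥0) (hH : Measurable fun p : E × ℝ => H p.1 p.2)
    (t : ℝ) (ht0 : 0 ≤ t)
    (hdens : ∀ᵐ x ∂ν, κT x = volume.withDensity fun u : ℝ =>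
        Set.indicator (Set.Ici (0:ℝ))
          (fun v => ENNReal.ofReal ((H x v : ℝ) * Real.exp (-∫ r in (0:ℝ)..v, (H x r : ℝ)))) u)
    (hevalm : ∀ u ∈ Set.Ico (0:ℝ) t, Measurable[m] fun x => ((H x u : ℝ≥0) : ℝ≥0∞))
    (s : Set ℝ) (hs : MeasurableSet s) :
    ∃ ψ : E → ℝ≥0∞, Measurable[m] ψ ∧ (∀ x, ψ x ≤ 1) ∧
      ∀ᵐ x ∂ν, κT x ((fun u : ℝ => min u t) ⁻¹' s) = ψ x := by
  classical
  have hG : Measurable fun p : E × ℝ => ((H p.1 p.2 : ℝ≥0) : ℝ≥0∞) :=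
    measurable_coe_nnreal_ennreal.comp hH
  set Hk : E → ℝ → ℝ≥0∞ :=
    fun x u => ∫⁻ y, ((H y u : ℝ≥0) : ℝ≥0∞) ∂(condExpKernel ν m x) with hHkdef
  set dk : E → ℝ → ℝ≥0∞ :=
    fun x u => Hk x u * ENNReal.ofReal (Real.exp (-(∫⁻ r in Set.Ioc 0 u, Hk x r).toReal))
    with hdkdef
  -- ambient-measurable kernel with the same values, for joint measurability
  set κamb : Kernel E E :=
    ⟨fun x => condExpKernel ν m x, ((condExpKernel ν m).measurable).mono hm le_rfl⟩
    with hκambdef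
  haveI : IsMarkovKernel κamb :=
    ⟨fun a => inferInstanceAs (IsProbabilityMeasure ((condExpKernel ν m) a))⟩
  have hHkJamb : Measurable fun p : E × ℝ => Hk p.1 p.2 := by
    have h := measurable_lintegral_kernel_param κamb
      (G := fun y u => ((H y u : ℝ≥0) : ℝ≥0∞)) hG
    rw [hκambdef] at h
    simp only [hHkdef]
    exact h
  -- the a.e. identity `Hk = H` on `[0, t)`
  have hptu : ∀ u ∈ Set.Ico (0:ℝ) t, ∀ᵐ x ∂ν, Hk x u = ((H x u : ℝ≥0) : ℝ≥0∞) := by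
    intro u hu
    simp only [hHkdef]
    exact lintegral_condexpKernel_of_measurable ν hm (hevalm u hu)
  set Q : E × ℝ → ℝ≥0∞ :=
    fun p => if Hk p.1 p.2 = ((H p.1 p.2 : ℝ≥0) : ℝ≥0∞) then 0 else 1 with hQdef
  have hQm : Measurable Q := by
    refine Measurable.ite ?_ measurable_const measurable_const
    have : {p : E × ℝ | Hk p.1 p.2 = ((H p.1 p.2 : ℝ≥0) : ℝ≥0∞)}
        = {p : E × ℝ | Hk p.1 p.2 ≤ ((H p.1 p.2 : ℝ≥0) : ℝ≥0∞)}
          ∩ {p : E × ℝ | ((H p.1 p.2 : ℝ≥0) : ℝ≥0∞) ≤ Hk p.1 p.2} := by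
      ext p; simp [le_antisymm_iff]
    rw [this]
    exact (measurableSet_le hHkJamb hG).inter (measurableSet_le hG hHkJamb)
  have hswap : ∫⁻ x, ∫⁻ u, Q (x, u) ∂(volume.restrict (Set.Ico 0 t)) ∂ν
      = ∫⁻ u, ∫⁻ x, Q (x, u) ∂ν ∂(volume.restrict (Set.Ico 0 t)) :=
    lintegral_lintegral_swap hQm.aemeasurable
  have hrhs : ∫⁻ u, ∫⁻ x, Q (x, u) ∂ν ∂(volume.restrict (Set.Ico 0 t)) = 0 := by
    refine (lintegral_eq_zero_iff hQm.lintegral_prod_left').mpr ?_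
    filter_upwards [ae_restrict_mem measurableSet_Ico] with u hu
    refine (lintegral_eq_zero_iff (hQm.comp (measurable_id.prodMk measurable_const))).mpr ?_
    filter_upwards [hptu u hu] with x hx
    simp [hQdef, hx]
  have hx0 : ∀ᵐ x ∂ν, ∫⁻ u, Q (x, u) ∂(volume.restrict (Set.Ico 0 t)) = 0 := by
    have h0 := (lintegral_eq_zero_iff
      (hQm.lintegral_prod_right' (ν := volume.restrict (Set.Ico 0 t)))).mp (hswap.trans hrhs)
    filter_upwards [h0] with x hx
    exact hx
  have hae2 : ∀ᵐ x ∂ν, ∀ᵐ u ∂(volume.restrict (Set.Ico 0 t)),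
      Hk x u = ((H x u : ℝ≥0) : ℝ≥0∞) := by
    filter_upwards [hx0] with x hx
    have h1 := (lintegral_eq_zero_iff (hQm.comp measurable_prodMk_left)).mp hx
    filter_upwards [h1] with u hu
    by_cases hc : Hk x u = ((H x u : ℝ≥0) : ℝ≥0∞)
    · exact hc
    · simp [hQdef, hc] at hu
  set A : Set ℝ := (fun u : ℝ => min u t) ⁻¹' s with hAdef
  have hA : MeasurableSet A := (measurable_id.min measurable_const) hs
  set ψ0 : E → ℝ≥0∞ := fun x => (∫⁻ u in A ∩ Set.Ico 0 t, dk x u)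
      + (if t ∈ s then 1 - ∫⁻ u in Set.Ico 0 t, dk x u else 0) with hψ0def
  have hψ0m : Measurable[m] ψ0 := by
    have hψ1 : Measurable[m] fun x => ∫⁻ u in A ∩ Set.Ico 0 t, dk x u := by
      simp only [hdkdef, hHkdef]
      exact measurable_setLIntegral_hazard_density (mα := m) (condExpKernel ν m)
        (G := fun y u => ((H y u : ℝ≥0) : ℝ≥0∞)) hG (hA.inter measurableSet_Ico)
    have hψ2 : Measurable[m] fun x => ∫⁻ u in Set.Ico 0 t, dk x u := by
      simp only [hdkdef, hHkdef]
      exact measurable_setLIntegral_hazard_density (mα := m) (condExpKernel ν m)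
        (G := fun y u => ((H y u : ℝ≥0) : ℝ≥0∞)) hG measurableSet_Ico
    rw [hψ0def]
    by_cases hts : t ∈ s
    · simp only [if_pos hts]
      exact hψ1.add (measurable_const.sub hψ2)
    · simp only [if_neg hts]
      simpa using hψ1
  -- the key pointwise identity
  have key : ∀ᵐ x ∂ν, κT x A = ψ0 x := by
    filter_upwards [hdens, hae2] with x hxd hxe
    set dens' : ℝ → ℝ≥0∞ :=
      fun v => ENNReal.ofReal ((H x v : ℝ) * Real.exp (-∫ r in (0:ℝ)..v, (H x r : ℝ)))
      with hdens'def
    have hBpart : ∀ B : Set ℝ, MeasurableSet B →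
        κT x B = ∫⁻ u in B ∩ Set.Ici 0, dens' u := by
      intro B hB
      rw [hxd, withDensity_apply _ hB]
      calc ∫⁻ u in B, (Set.Ici (0:ℝ)).indicator dens' u
          = ∫⁻ u in Set.Ici 0, dens' u ∂(volume.restrict B) :=
            lintegral_indicator measurableSet_Ici _
        _ = ∫⁻ u in B ∩ Set.Ici 0, dens' u := by
            rw [Measure.restrict_restrict measurableSet_Ici, Set.inter_comm]
    have hdk_ae : ∀ᵐ u ∂(volume.restrict (Set.Ico 0 t)), dk x u = dens' u := by
      filter_upwards [hxe, ae_restrict_mem measurableSet_Ico] with u hu1 hu2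
      have hu0 : (0:ℝ) ≤ u := hu2.1
      have hut : u < t := hu2.2
      have hIoc : Set.Ioc 0 u ⊆ Set.Ico 0 t :=
        fun r hr => ⟨le_of_lt hr.1, lt_of_le_of_lt hr.2 hut⟩
      have hIk : (∫⁻ r in Set.Ioc 0 u, Hk x r) = ∫⁻ r in Set.Ioc 0 u, ((H x r : ℝ≥0) : ℝ≥0∞) :=
        lintegral_congr_ae (ae_restrict_of_ae_restrict_of_subset hIoc hxe)
      have hHx : Measurable (fun r : ℝ => H x r) :=
        hH.comp (measurable_const.prodMk measurable_id)
      simp only [hdkdef, hdens'def]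
      rw [hu1, hIk, intervalIntegral_coe_eq_toReal hHx hu0,
        ENNReal.ofReal_mul (H x u).coe_nonneg, ENNReal.ofReal_coe_nnreal]
    have h1 : κT x A = κT x (A ∩ Set.Iio t) + κT x (A \ Set.Iio t) :=
      (measure_inter_add_diff A measurableSet_Iio).symm
    have h2 : (A ∩ Set.Iio t) ∩ Set.Ici 0 = A ∩ Set.Ico 0 t := by
      ext u
      simp only [Set.mem_inter_iff, Set.mem_Iio, Set.mem_Ici, Set.mem_Ico]
      tauto
    have h3 : κT x (A ∩ Set.Iio t) = ∫⁻ u in A ∩ Set.Ico 0 t, dk x u := by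
      rw [hBpart _ (hA.inter measurableSet_Iio), h2]
      exact (lintegral_congr_ae
        (ae_restrict_of_ae_restrict_of_subset Set.inter_subset_right hdk_ae)).symm
    have hAdiff : A \ Set.Iio t = if t ∈ s then Set.Ici t else ∅ := by
      ext u
      simp only [Set.mem_diff, Set.mem_Iio, not_lt, hAdef, Set.mem_preimage]
      constructor
      · rintro ⟨hAs, htu⟩
        rw [min_eq_right htu] at hAs
        rw [if_pos hAs]
        exact htu
      · intro hu
        by_cases hts : t ∈ s
        · rw [if_pos hts] at hu
          exact ⟨by rw [min_eq_right hu]; exact hts, hu⟩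
        · rw [if_neg hts] at hu
          exact absurd hu (Set.notMem_empty u)
    have h4 : κT x (A \ Set.Iio t)
        = if t ∈ s then 1 - ∫⁻ u in Set.Ico 0 t, dk x u else 0 := by
      rw [hAdiff]
      by_cases hts : t ∈ s
      · rw [if_pos hts, if_pos hts, ← Set.compl_Iio, prob_compl_eq_one_sub measurableSet_Iio]
        congr 1
        have h5 : Set.Iio t ∩ Set.Ici 0 = Set.Ico 0 t := by
          ext u
          simp only [Set.mem_inter_iff, Set.mem_Iio, Set.mem_Ici, Set.mem_Ico]
          tauto
        rw [hBpart _ measurableSet_Iio, h5]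
        exact (lintegral_congr_ae hdk_ae).symm
      · rw [if_neg hts, if_neg hts]
        exact measure_empty
    rw [h1, h3, h4, hψ0def]
  refine ⟨fun x => min (ψ0 x) 1, hψ0m.min measurable_const, fun x => min_le_right _ _, ?_⟩
  filter_upwards [key] with x hx
  rw [← hx]
  exact (min_eq_left prob_le_one).symm

/-- Theorem 1 (conditional-independence form): under the hazard model for treatment assignment,
if the restricted treatment time `min (T, t)` and the potential outcome `Y` are conditionally
independent given `σ(X)`, then they are conditionally independent given the σ-algebra generated
by the propensity process `Θ_t`. -/
theorem condIndepFun_min_outcome_given_propensityProcess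
    {Ω E : Type*}
    [MeasurableSpace Ω] [StandardBorelSpace Ω] [Nonempty Ω]
    [MeasurableSpace E] [StandardBorelSpace E]
    (μ : Measure Ω) [IsProbabilityMeasure μ]
    (T : Ω → ℝ) (X : Ω → E) (Y : Ω → ℝ)
    (hT : Measurable T) (hX : Measurable X) (hY : Measurable Y)
    (L : ℝ) (hL : 0 < L) (t : ℝ) (ht : t ∈ Set.Ico (0 : ℝ) L)
    (H : E → ℝ → NNReal) (hH : Measurable fun p : E × ℝ => H p.1 p.2)
    (hdens : ∀ᵐ x ∂(μ.map X), condDistrib T X μ x =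
      volume.withDensity fun u : ℝ =>
        Set.indicator (Set.Ici (0 : ℝ))
          (fun v => ENNReal.ofReal
            ((H x v : ℝ) * Real.exp (-∫ s in (0 : ℝ)..v, (H x s : ℝ)))) u)
    (h_ignorable : CondIndepFun (MeasurableSpace.comap X inferInstance) hX.comap_le
      (fun ω => min (T ω) t) Y μ) :
    CondIndepFun
      (MeasurableSpace.comap
        (fun ω => fun s : ℝ => if s ∈ Set.Ico (0 : ℝ) t then H (X ω) s else 0) inferInstance)
      (Measurable.comap_le (measurable_pi_lambda _ (fun s => by
        by_cases hs : s ∈ Set.Ico (0 : ℝ) t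
        · simp only [if_pos hs]
          exact hH.comp (hX.prodMk measurable_const)
        · simp only [if_neg hs]
          exact measurable_const)))
      (fun ω => min (T ω) t) Y μ := by
  classical
  have hfEm : Measurable (fun x : E => fun s : ℝ => if s ∈ Set.Ico (0:ℝ) t then H x s else 0) := by
    refine measurable_pi_lambda _ (fun s => ?_)
    by_cases hs : s ∈ Set.Ico (0:ℝ) t
    · simp only [if_pos hs]; exact hH.comp (measurable_id.prodMk measurable_const)
    · simp only [if_neg hs]; exact measurable_const
  have hEq : MeasurableSpace.comap
      (fun ω => fun s : ℝ => if s ∈ Set.Ico (0:ℝ) t then H (X ω) s else 0) inferInstance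
      = (MeasurableSpace.comap
          (fun x : E => fun s : ℝ => if s ∈ Set.Ico (0:ℝ) t then H x s else 0)
          inferInstance).comap X := by
    rw [MeasurableSpace.comap_comp]
    rfl
  haveI : Nonempty E := Nonempty.map X inferInstance
  haveI : IsProbabilityMeasure (μ.map X) := Measure.isProbabilityMeasure_map hX.aemeasurable
  have h12 : MeasurableSpace.comap
      (fun ω => fun s : ℝ => if s ∈ Set.Ico (0:ℝ) t then H (X ω) s else 0) inferInstance
      ≤ MeasurableSpace.comap X inferInstance := by
    rw [hEq]
    exact MeasurableSpace.comap_mono hfEm.comap_le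
  have hXmE' : Measurable[MeasurableSpace.comap
      (fun ω => fun s : ℝ => if s ∈ Set.Ico (0:ℝ) t then H (X ω) s else 0) inferInstance,
      MeasurableSpace.comap
        (fun x : E => fun s : ℝ => if s ∈ Set.Ico (0:ℝ) t then H x s else 0) inferInstance] X :=
    Measurable.of_comap_le (le_of_eq hEq.symm)
  have hfEmE' : Measurable[MeasurableSpace.comap
      (fun x : E => fun s : ℝ => if s ∈ Set.Ico (0:ℝ) t then H x s else 0) inferInstance]
      (fun x : E => fun s : ℝ => if s ∈ Set.Ico (0:ℝ) t then H x s else 0) :=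
    Measurable.of_comap_le le_rfl
  have hevalm : ∀ u ∈ Set.Ico (0:ℝ) t, Measurable[MeasurableSpace.comap
      (fun x : E => fun s : ℝ => if s ∈ Set.Ico (0:ℝ) t then H x s else 0) inferInstance]
      fun x => ((H x u : ℝ≥0) : ℝ≥0∞) := by
    intro u hu
    have h2 := (measurable_pi_apply u).comp hfEmE'
    have h3 : (fun x : E => ((H x u : ℝ≥0) : ℝ≥0∞))
        = fun x : E => (((if u ∈ Set.Ico (0:ℝ) t then H x u else 0 : ℝ≥0)) : ℝ≥0∞) := by
      funext x
      rw [if_pos hu]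
    rw [h3]
    exact measurable_coe_nnreal_ennreal.comp h2
  have hmin : Measurable fun ω => min (T ω) t := hT.min measurable_const
  refine condIndepFun_of_exists_measurable_version h12 hX.comap_le hmin hY h_ignorable ?_
  intro s hs
  obtain ⟨ψ, hψm, hψle, hψae⟩ := exists_hazard_version
    (m := MeasurableSpace.comap
      (fun x : E => fun s : ℝ => if s ∈ Set.Ico (0:ℝ) t then H x s else 0) inferInstance)
    hfEm.comap_le (μ.map X) (condDistrib T X μ) H hH t ht.1 hdens hevalm s hs
  have keyμ : ∀ᵐ ω ∂μ,
      condDistrib T X μ (X ω) ((fun u : ℝ => min u t) ⁻¹' s) = ψ (X ω) :=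
    ae_of_ae_map hX.aemeasurable hψae
  refine ⟨fun ω => (ψ (X ω)).toReal,
    ((hψm.comp hXmE').ennreal_toReal).stronglyMeasurable, ?_, ?_⟩
  · intro ω
    rw [Real.norm_of_nonneg ENNReal.toReal_nonneg]
    simpa using ENNReal.toReal_mono ENNReal.one_ne_top (hψle (X ω))
  · have hA : MeasurableSet ((fun u : ℝ => min u t) ⁻¹' s) :=
      (measurable_id.min measurable_const) hs
    have hc := condDistrib_ae_eq_condExp (μ := μ) hX hT hA
    have hpre : (fun ω => min (T ω) t) ⁻¹' s = T ⁻¹' ((fun u : ℝ => min u t) ⁻¹' s) := rfl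
    rw [hpre]
    refine hc.symm.trans ?_
    filter_upwards [keyμ] with ω hω
    rw [measureReal_def, hω]
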